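/- Let φ be a 3-CNF formula with n variables and m clauses and G_φ the digraph from the reduction. Then φ has a satisfying assignment if and only if G_φ has an undominated out-regular induced subgraph. -/

import Mathlib

open Finset

/-! The edge-weighted bipartite digraph `G_φ` from the 3-SAT reduction.
A 3-CNF formula with `n` variables and `m` clauses is given by
`cl : Fin m → Fin 3 → Fin n × Bool`: the `k`-th literal of clause `j` is the
variable `(cl j k).1` with sign `(cl j k).2` (`true` = positive). -/

/-- Row-side vertices of `G_φ`: `y_i`, `ȳ_i`, `z_{i1}`, clause vertices `C_j`
and clause coordinating vertices `u_{jk}`. -/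
inductive RowV (n m : ℕ) where
  | y (i : Fin n)
  | ybar (i : Fin n)
  | z1 (i : Fin n)
  | Cl (j : Fin m)
  | u (j : Fin m) (k : Fin 3)
  deriving DecidableEq, Fintype

/-- Column-side vertices of `G_φ`: `x_i`, `x̄_i`, `z_{i2}`, clause coordinating
vertices `v_{jk}` and the additional vertex `a`. -/
inductive ColV (n m : ℕ) where
  | x (i : Fin n)
  | xbar (i : Fin n)
  | z2 (i : Fin n)
  | v (j : Fin m) (k : Fin 3)
  | a
  deriving DecidableEq, Fintype

/-- The variable vertex corresponding to the `k`-th literal of clause `j`. -/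
def lit {n m : ℕ} (cl : Fin m → Fin 3 → Fin n × Bool) (j : Fin m) (k : Fin 3) :
    ColV n m :=
  if (cl j k).2 then ColV.x (cl j k).1 else ColV.xbar (cl j k).1

/-- Weights of the arcs of `G_φ` going from the row side to the column side
(weight `0` means "no arc"). -/
def wR {n m : ℕ} (cl : Fin m → Fin 3 → Fin n × Bool) :
    RowV n m → ColV n m → ℝ
  | RowV.y _, ColV.a => 1
  | RowV.ybar _, ColV.a => 1
  | RowV.z1 i, ColV.z2 i' => if i = i' then 1 else 0
  | RowV.Cl j, ColV.v j' _ => if j = j' then 1 else 0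
  | RowV.u j k, c => if c = lit cl j k then 1 else 0
  | _, _ => 0

/-- Weights of the arcs of `G_φ` going from the column side to the row side
(weight `0` means "no arc"). -/
def wC {n m : ℕ} : ColV n m → RowV n m → ℝ
  | ColV.x i, RowV.y i' => if i = i' then (m + n : ℝ) else 0
  | ColV.xbar i, RowV.ybar i' => if i = i' then (m + n : ℝ) else 0
  | ColV.z2 i, RowV.y i' => if i = i' then (m + n : ℝ) else 0
  | ColV.z2 i, RowV.ybar i' => if i = i' then (m + n : ℝ) else 0
  | ColV.v j k, RowV.u j' k' => if j = j' ∧ k = k' then (m + n : ℝ) else 0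
  | ColV.a, RowV.Cl _ => 1
  | ColV.a, RowV.z1 _ => 1
  | _, _ => 0

/-- The assignment `ξ` satisfies the formula `cl`. -/
def Satisfies {n m : ℕ} (cl : Fin m → Fin 3 → Fin n × Bool)
    (ξ : Fin n → Bool) : Prop :=
  ∀ j : Fin m, ∃ k : Fin 3, ξ (cl j k).1 = (cl j k).2

section Helpers

variable {n m : ℕ}

lemma wR_y_eq (cl : Fin m → Fin 3 → Fin n × Bool) (i : Fin n) (c : ColV n m) :
    wR cl (RowV.y i) c = if c = ColV.a then 1 else 0 := by
  cases c <;> simp [wR]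

lemma wR_ybar_eq (cl : Fin m → Fin 3 → Fin n × Bool) (i : Fin n) (c : ColV n m) :
    wR cl (RowV.ybar i) c = if c = ColV.a then 1 else 0 := by
  cases c <;> simp [wR]

lemma wR_z1_eq (cl : Fin m → Fin 3 → Fin n × Bool) (i : Fin n) (c : ColV n m) :
    wR cl (RowV.z1 i) c = if c = ColV.z2 i then 1 else 0 := by
  cases c <;> simp [wR, eq_comm]

lemma wR_u_eq (cl : Fin m → Fin 3 → Fin n × Bool) (j : Fin m) (k : Fin 3) (c : ColV n m) :
    wR cl (RowV.u j k) c = if c = lit cl j k then 1 else 0 := by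
  cases c <;> rfl

lemma wR_Cl_eq (cl : Fin m → Fin 3 → Fin n × Bool) (j : Fin m) (c : ColV n m) :
    wR cl (RowV.Cl j) c = ∑ k : Fin 3, if c = ColV.v j k then (1:ℝ) else 0 := by
  cases c <;> simp [wR]
  case v j' k' =>
    by_cases h : j = j'
    · subst h; simp [Finset.filter_eq]
    · have h' : j' ≠ j := fun e => h e.symm
      simp [h, h']

lemma wC_x_eq (i : Fin n) (r : RowV n m) :
    wC (ColV.x i) r = if r = RowV.y i then (m + n : ℝ) else 0 := by
  cases r <;> simp [wC, eq_comm]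

lemma wC_xbar_eq (i : Fin n) (r : RowV n m) :
    wC (ColV.xbar i) r = if r = RowV.ybar i then (m + n : ℝ) else 0 := by
  cases r <;> simp [wC, eq_comm]

lemma wC_z2_eq (i : Fin n) (r : RowV n m) :
    wC (ColV.z2 i) r =
      (if r = RowV.y i then (m + n : ℝ) else 0) +
      (if r = RowV.ybar i then (m + n : ℝ) else 0) := by
  cases r <;> simp [wC, eq_comm]

lemma wC_v_eq (j : Fin m) (k : Fin 3) (r : RowV n m) :
    wC (ColV.v j k) r = if r = RowV.u j k then (m + n : ℝ) else 0 := by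
  cases r <;> simp [wC, and_comm, eq_comm]

lemma wC_a_eq (r : RowV n m) :
    wC (ColV.a) r =
      (∑ j : Fin m, if r = RowV.Cl j then (1:ℝ) else 0) +
      (∑ i : Fin n, if r = RowV.z1 i then (1:ℝ) else 0) := by
  cases r <;> simp [wC, Finset.sum_ite_eq]

end Helpers
section Sums

variable {n m : ℕ}

lemma sum_y (cl : Fin m → Fin 3 → Fin n × Bool) (SC : Finset (ColV n m)) (i : Fin n) :
    ∑ c ∈ SC, wR cl (RowV.y i) c = if ColV.a ∈ SC then (1:ℝ) else 0 := by
  simp_rw [wR_y_eq]; exact Finset.sum_ite_eq' SC _ (fun _ => 1)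

lemma sum_ybar (cl : Fin m → Fin 3 → Fin n × Bool) (SC : Finset (ColV n m)) (i : Fin n) :
    ∑ c ∈ SC, wR cl (RowV.ybar i) c = if ColV.a ∈ SC then (1:ℝ) else 0 := by
  simp_rw [wR_ybar_eq]; exact Finset.sum_ite_eq' SC _ (fun _ => 1)

lemma sum_z1 (cl : Fin m → Fin 3 → Fin n × Bool) (SC : Finset (ColV n m)) (i : Fin n) :
    ∑ c ∈ SC, wR cl (RowV.z1 i) c = if ColV.z2 i ∈ SC then (1:ℝ) else 0 := by
  simp_rw [wR_z1_eq]; exact Finset.sum_ite_eq' SC _ (fun _ => 1)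

lemma sum_u (cl : Fin m → Fin 3 → Fin n × Bool) (SC : Finset (ColV n m)) (j : Fin m) (k : Fin 3) :
    ∑ c ∈ SC, wR cl (RowV.u j k) c = if lit cl j k ∈ SC then (1:ℝ) else 0 := by
  simp_rw [wR_u_eq]; exact Finset.sum_ite_eq' SC _ (fun _ => 1)

lemma sum_Cl (cl : Fin m → Fin 3 → Fin n × Bool) (SC : Finset (ColV n m)) (j : Fin m) :
    ∑ c ∈ SC, wR cl (RowV.Cl j) c = ∑ k : Fin 3, if ColV.v j k ∈ SC then (1:ℝ) else 0 := by
  simp_rw [wR_Cl_eq]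
  rw [Finset.sum_comm]
  exact Finset.sum_congr rfl fun k _ => Finset.sum_ite_eq' SC _ (fun _ => 1)

lemma sum_x (SR : Finset (RowV n m)) (i : Fin n) :
    ∑ r ∈ SR, wC (ColV.x i) r = if RowV.y i ∈ SR then (m + n : ℝ) else 0 := by
  simp_rw [wC_x_eq]; exact Finset.sum_ite_eq' SR _ (fun _ => (m + n : ℝ))

lemma sum_xbar (SR : Finset (RowV n m)) (i : Fin n) :
    ∑ r ∈ SR, wC (ColV.xbar i) r = if RowV.ybar i ∈ SR then (m + n : ℝ) else 0 := by
  simp_rw [wC_xbar_eq]; exact Finset.sum_ite_eq' SR _ (fun _ => (m + n : ℝ))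

lemma sum_v (SR : Finset (RowV n m)) (j : Fin m) (k : Fin 3) :
    ∑ r ∈ SR, wC (ColV.v j k) r = if RowV.u j k ∈ SR then (m + n : ℝ) else 0 := by
  simp_rw [wC_v_eq]; exact Finset.sum_ite_eq' SR _ (fun _ => (m + n : ℝ))

lemma sum_z2 (SR : Finset (RowV n m)) (i : Fin n) :
    ∑ r ∈ SR, wC (ColV.z2 i) r =
      (if RowV.y i ∈ SR then (m + n : ℝ) else 0) +
      (if RowV.ybar i ∈ SR then (m + n : ℝ) else 0) := by
  simp_rw [wC_z2_eq, Finset.sum_add_distrib]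
  rw [Finset.sum_ite_eq' SR _ (fun _ => (m + n : ℝ)),
    Finset.sum_ite_eq' SR _ (fun _ => (m + n : ℝ))]

lemma sum_a (SR : Finset (RowV n m)) :
    ∑ r ∈ SR, wC (ColV.a) r =
      (∑ j : Fin m, if RowV.Cl j ∈ SR then (1:ℝ) else 0) +
      (∑ i : Fin n, if RowV.z1 i ∈ SR then (1:ℝ) else 0) := by
  simp_rw [wC_a_eq, Finset.sum_add_distrib]
  rw [Finset.sum_comm, Finset.sum_comm (s := SR)]
  exact congrArg₂ (· + ·)
    (Finset.sum_congr rfl fun j _ => Finset.sum_ite_eq' SR _ (fun _ => 1))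
    (Finset.sum_congr rfl fun i _ => Finset.sum_ite_eq' SR _ (fun _ => 1))

end Sums
section Main

/-- Row selector for the forward direction. -/
def rowSel {n m : ℕ} (ξ : Fin n → Bool) (kj : Fin m → Fin 3) : RowV n m → Bool
  | .y i => ξ i
  | .ybar i => !ξ i
  | .z1 _ => true
  | .Cl _ => true
  | .u j k => k == kj j

/-- Column selector for the forward direction. -/
def colSel {n m : ℕ} (ξ : Fin n → Bool) (kj : Fin m → Fin 3) : ColV n m → Bool
  | .x i => ξ i
  | .xbar i => !ξ i
  | .z2 _ => true
  | .v j k => k == kj j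
  | .a => true

theorem fwd {n m : ℕ} (cl : Fin m → Fin 3 → Fin n × Bool)
    (hm : 1 ≤ m) (hn : 1 ≤ n)
    (h : ∃ ξ : Fin n → Bool, Satisfies cl ξ) :
    (∃ (α β : ℝ) (SR : Finset (RowV n m)) (SC : Finset (ColV n m)),
        SR.Nonempty ∧ SC.Nonempty ∧
        (∀ r ∈ SR, ∑ c ∈ SC, wR cl r c = α) ∧
        (∀ c ∈ SC, ∑ r ∈ SR, wC c r = β) ∧
        (∀ r ∉ SR, ∑ c ∈ SC, wR cl r c ≤ α) ∧
        (∀ c ∉ SC, ∑ r ∈ SR, wC c r ≤ β)) := by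
  obtain ⟨ξ, hξ⟩ := h
  choose kj hkj using hξ
  set SR : Finset (RowV n m) := Finset.univ.filter (fun r => rowSel ξ kj r = true) with hSRdef
  set SC : Finset (ColV n m) := Finset.univ.filter (fun c => colSel ξ kj c = true) with hSCdef
  have hmemR : ∀ r, r ∈ SR ↔ rowSel ξ kj r = true := by
    intro r; simp [hSRdef]
  have hmemC : ∀ c, c ∈ SC ↔ colSel ξ kj c = true := by
    intro c; simp [hSCdef]
  have haSC : ColV.a ∈ SC := by rw [hmemC]; rfl
  have hz2SC : ∀ i, ColV.z2 i ∈ SC := by intro i; rw [hmemC]; rfl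
  have hvSC : ∀ j k, (ColV.v j k ∈ SC ↔ k = kj j) := by
    intro j k; rw [hmemC]; simp [colSel]
  have hxSC : ∀ i, (ColV.x i ∈ SC ↔ ξ i = true) := by
    intro i; rw [hmemC]; simp [colSel]
  have hxbSC : ∀ i, (ColV.xbar i ∈ SC ↔ ξ i = false) := by
    intro i; rw [hmemC]; simp [colSel]
  have hClSR : ∀ j, RowV.Cl j ∈ SR := by intro j; rw [hmemR]; rfl
  have hz1SR : ∀ i, RowV.z1 i ∈ SR := by intro i; rw [hmemR]; rfl
  have hySR : ∀ i, (RowV.y i ∈ SR ↔ ξ i = true) := by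
    intro i; rw [hmemR]; simp [rowSel]
  have hybSR : ∀ i, (RowV.ybar i ∈ SR ↔ ξ i = false) := by
    intro i; rw [hmemR]; simp [rowSel]
  have huSR : ∀ j k, (RowV.u j k ∈ SR ↔ k = kj j) := by
    intro j k; rw [hmemR]; simp [rowSel]
  have hN0 : (0:ℝ) ≤ (m + n : ℝ) := by positivity
  refine ⟨1, (m + n : ℝ), SR, SC, ⟨RowV.Cl ⟨0, hm⟩, hClSR _⟩, ⟨ColV.a, haSC⟩, ?_, ?_, ?_, ?_⟩
  · -- row regularity
    intro r hr
    cases r with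
    | y i => rw [sum_y, if_pos haSC]
    | ybar i => rw [sum_ybar, if_pos haSC]
    | z1 i => rw [sum_z1, if_pos (hz2SC i)]
    | Cl j =>
        rw [sum_Cl]
        have : ∀ k : Fin 3, (if ColV.v j k ∈ SC then (1:ℝ) else 0)
            = (if k = kj j then (1:ℝ) else 0) := by
          intro k; simp [hvSC j k]
        simp_rw [this]
        rw [Finset.sum_ite_eq' Finset.univ (kj j) (fun _ => (1:ℝ))]
        simp
    | u j k =>
        have hk : k = kj j := (huSR j k).1 hr
        rw [sum_u, if_pos]
        have hsat := hkj j
        rw [← hk] at hsat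
        unfold lit
        rcases hb : (cl j k).2 with _ | _
        · rw [hb] at hsat
          simp only [hb, Bool.false_eq_true, if_false]
          exact (hxbSC _).2 hsat
        · rw [hb] at hsat
          simp only [hb, if_true]
          exact (hxSC _).2 hsat
  · -- column regularity
    intro c hc
    cases c with
    | x i =>
        have : ξ i = true := (hxSC i).1 hc
        rw [sum_x, if_pos ((hySR i).2 this)]
    | xbar i =>
        have : ξ i = false := (hxbSC i).1 hc
        rw [sum_xbar, if_pos ((hybSR i).2 this)]
    | z2 i =>
        rw [sum_z2]
        rcases hb : ξ i with _ | _
        · rw [if_neg, if_pos ((hybSR i).2 hb)]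
          · ring
          · rw [hySR]; simp [hb]
        · rw [if_pos ((hySR i).2 hb), if_neg]
          · ring
          · rw [hybSR]; simp [hb]
    | v j k =>
        have hk : k = kj j := (hvSC j k).1 hc
        rw [sum_v, if_pos ((huSR j k).2 hk)]
    | a =>
        rw [sum_a]
        have h1 : ∀ j : Fin m, (if RowV.Cl j ∈ SR then (1:ℝ) else 0) = 1 := by
          intro j; rw [if_pos (hClSR j)]
        have h2 : ∀ i : Fin n, (if RowV.z1 i ∈ SR then (1:ℝ) else 0) = 1 := by
          intro i; rw [if_pos (hz1SR i)]
        simp_rw [h1, h2, Finset.sum_const, Finset.card_univ, Fintype.card_fin, nsmul_eq_mul,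
          mul_one]
  · -- rows undominated
    intro r hr
    cases r with
    | y i => rw [sum_y]; split_ifs <;> norm_num
    | ybar i => rw [sum_ybar]; split_ifs <;> norm_num
    | z1 i => exact absurd (hz1SR i) hr
    | Cl j => exact absurd (hClSR j) hr
    | u j k => rw [sum_u]; split_ifs <;> norm_num
  · -- columns undominated
    intro c hc
    cases c with
    | x i => rw [sum_x]; split_ifs <;> simp [hN0]
    | xbar i => rw [sum_xbar]; split_ifs <;> simp [hN0]
    | z2 i => exact absurd (hz2SC i) hc
    | v j k =>
        have hk : ¬ k = kj j := fun h => hc ((hvSC j k).2 h)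
        rw [sum_v, if_neg]
        · exact hN0
        · rw [huSR]; exact hk
    | a => exact absurd haSC hc

end Main
section Bwd

lemma wR_nonneg {n m : ℕ} (cl : Fin m → Fin 3 → Fin n × Bool) (r : RowV n m) (c : ColV n m) :
    0 ≤ wR cl r c := by
  cases r <;> cases c <;> simp [wR] <;> split_ifs <;> norm_num

lemma wC_nonneg {n m : ℕ} (c : ColV n m) (r : RowV n m) : 0 ≤ wC c r := by
  have h : (0:ℝ) ≤ (m + n : ℝ) := by positivity
  cases c <;> cases r <;> simp [wC] <;> split_ifs <;> simp [h]

lemma ind_sum_le {ι : Type*} [Fintype ι] (P : ι → Prop) [DecidablePred P] :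
    (∑ i : ι, if P i then (1:ℝ) else 0) ≤ (Fintype.card ι : ℝ) := by
  calc (∑ i : ι, if P i then (1:ℝ) else 0) ≤ ∑ _i : ι, (1:ℝ) :=
        Finset.sum_le_sum (fun i _ => by split_ifs <;> norm_num)
    _ = (Fintype.card ι : ℝ) := by simp
lemma ind_sum_nonneg {ι : Type*} [Fintype ι] (P : ι → Prop) [DecidablePred P] :
    (0:ℝ) ≤ ∑ i : ι, if P i then (1:ℝ) else 0 :=
  Finset.sum_nonneg (fun i _ => by split_ifs <;> norm_num)

lemma ind_sum_all {ι : Type*} [Fintype ι] (P : ι → Prop) [DecidablePred P]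
    (h : (Fintype.card ι : ℝ) ≤ ∑ i : ι, if P i then (1:ℝ) else 0) : ∀ i, P i := by
  have h1 : ∀ i ∈ Finset.univ, (0:ℝ) ≤ 1 - (if P i then (1:ℝ) else 0) := by
    intro i _; split_ifs <;> norm_num
  have h0 : ∑ i : ι, ((1:ℝ) - if P i then (1:ℝ) else 0) = 0 := by
    rw [Finset.sum_sub_distrib]
    have : ∑ _i : ι, (1:ℝ) = (Fintype.card ι : ℝ) := by simp
    rw [this]
    have := ind_sum_le P
    linarith
  intro i
  have h2 := (Finset.sum_eq_zero_iff_of_nonneg h1).1 h0 i (Finset.mem_univ i)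
  by_contra hP
  rw [if_neg hP] at h2; norm_num at h2

lemma ind_one_le_sum {ι : Type*} [Fintype ι] (P : ι → Prop) [DecidablePred P] {i : ι}
    (h : P i) : (1:ℝ) ≤ ∑ i' : ι, if P i' then (1:ℝ) else 0 := by
  have h2 : (if P i then (1:ℝ) else 0) ≤ ∑ i' : ι, if P i' then (1:ℝ) else 0 :=
    Finset.single_le_sum (f := fun i' => if P i' then (1:ℝ) else 0)
      (fun i' _ => by split_ifs <;> norm_num) (Finset.mem_univ i)
  rwa [if_pos h] at h2

theorem bwd {n m : ℕ} (cl : Fin m → Fin 3 → Fin n × Bool)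
    (hm : 1 ≤ m) (hn : 1 ≤ n)
    (hlit : ∀ (i : Fin n) (b : Bool), ∃ (j : Fin m) (k : Fin 3), cl j k = (i, b))
    (h : ∃ (α β : ℝ) (SR : Finset (RowV n m)) (SC : Finset (ColV n m)),
        SR.Nonempty ∧ SC.Nonempty ∧
        (∀ r ∈ SR, ∑ c ∈ SC, wR cl r c = α) ∧
        (∀ c ∈ SC, ∑ r ∈ SR, wC c r = β) ∧
        (∀ r ∉ SR, ∑ c ∈ SC, wR cl r c ≤ α) ∧
        (∀ c ∉ SC, ∑ r ∈ SR, wC c r ≤ β)) :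
    ∃ ξ : Fin n → Bool, Satisfies cl ξ := by
  obtain ⟨α, β, SR, SC, hSR, hSC, hrow, hcol, hrdom, hcdom⟩ := h
  have hN : (0:ℝ) < (m + n : ℝ) := by
    have h1 : (1:ℝ) ≤ (n:ℝ) := by exact_mod_cast hn
    have h0 : (0:ℝ) ≤ (m:ℝ) := Nat.cast_nonneg m
    linarith
  have hrle : ∀ r, ∑ c ∈ SC, wR cl r c ≤ α := by
    intro r; by_cases h' : r ∈ SR
    · exact (hrow r h').le
    · exact hrdom r h'
  have hcle : ∀ c, ∑ r ∈ SR, wC c r ≤ β := by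
    intro c; by_cases h' : c ∈ SC
    · exact (hcol c h').le
    · exact hcdom c h'
  have hrnn : ∀ r, (0:ℝ) ≤ ∑ c ∈ SC, wR cl r c :=
    fun r => Finset.sum_nonneg fun c _ => wR_nonneg cl r c
  have hcnn : ∀ c, (0:ℝ) ≤ ∑ r ∈ SR, wC c r :=
    fun c => Finset.sum_nonneg fun r _ => wC_nonneg c r
  have hy_imp : ∀ i, RowV.y i ∈ SR → (m + n : ℝ) ≤ β := by
    intro i h'
    have hh := hcle (ColV.x i); rwa [sum_x, if_pos h'] at hh
  have hyb_imp : ∀ i, RowV.ybar i ∈ SR → (m + n : ℝ) ≤ β := by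
    intro i h'
    have hh := hcle (ColV.xbar i); rwa [sum_xbar, if_pos h'] at hh
  have hu_imp : ∀ j k, RowV.u j k ∈ SR → (m + n : ℝ) ≤ β := by
    intro j k h'
    have hh := hcle (ColV.v j k); rwa [sum_v, if_pos h'] at hh
  have hβnn : (0:ℝ) ≤ β := by
    obtain ⟨c₀, hc₀⟩ := hSC
    have := hcnn c₀; rwa [hcol c₀ hc₀] at this
  -- β is positive
  have hβpos : (0:ℝ) < β := by
    rcases lt_or_eq_of_le hβnn with h' | h'
    · exact h'
    · exfalso
      have hy0 : ∀ i, RowV.y i ∉ SR := fun i hi => by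
        have := hy_imp i hi; linarith
      have hyb0 : ∀ i, RowV.ybar i ∉ SR := fun i hi => by
        have := hyb_imp i hi; linarith
      have hu0 : ∀ j k, RowV.u j k ∉ SR := fun j k hi => by
        have := hu_imp j k hi; linarith
      have hca := hcle ColV.a
      rw [sum_a] at hca
      have hS1 := ind_sum_nonneg (fun j : Fin m => RowV.Cl j ∈ SR)
      have hS2 := ind_sum_nonneg (fun i : Fin n => RowV.z1 i ∈ SR)
      have hCl0 : ∀ j, RowV.Cl j ∉ SR := by
        intro j hj
        have hone : (1:ℝ) ≤ ∑ j' : Fin m, if RowV.Cl j' ∈ SR then (1:ℝ) else 0 := by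
          simpa using ind_one_le_sum (fun j' : Fin m => RowV.Cl j' ∈ SR) hj
        linarith
      have hz10 : ∀ i, RowV.z1 i ∉ SR := by
        intro i hi
        have hone : (1:ℝ) ≤ ∑ i' : Fin n, if RowV.z1 i' ∈ SR then (1:ℝ) else 0 := by
          simpa using ind_one_le_sum (fun i' : Fin n => RowV.z1 i' ∈ SR) hi
        linarith
      obtain ⟨r₀, hr₀⟩ := hSR
      cases r₀ with
      | y i => exact hy0 i hr₀
      | ybar i => exact hyb0 i hr₀
      | z1 i => exact hz10 i hr₀
      | Cl j => exact hCl0 j hr₀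
      | u j k => exact hu0 j k hr₀
  -- N ≤ β
  have hNβ : (m + n : ℝ) ≤ β := by
    by_cases hey : ∃ i, RowV.y i ∈ SR
    · obtain ⟨i, hi⟩ := hey; exact hy_imp i hi
    by_cases heyb : ∃ i, RowV.ybar i ∈ SR
    · obtain ⟨i, hi⟩ := heyb; exact hyb_imp i hi
    by_cases heu : ∃ j k, RowV.u j k ∈ SR
    · obtain ⟨j, k, hi⟩ := heu; exact hu_imp j k hi
    push_neg at hey heyb heu
    exfalso
    have hz2no : ∀ i, ColV.z2 i ∉ SC := by
      intro i hi
      have := hcol _ hi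
      rw [sum_z2, if_neg (hey i), if_neg (heyb i)] at this
      linarith
    have hvno : ∀ j k, ColV.v j k ∉ SC := by
      intro j k hjk
      have := hcol _ hjk
      rw [sum_v, if_neg (heu j k)] at this
      linarith
    have hα0 : α = 0 := by
      obtain ⟨r₀, hr₀⟩ := hSR
      cases r₀ with
      | y i => exact absurd hr₀ (hey i)
      | ybar i => exact absurd hr₀ (heyb i)
      | u j k => exact absurd hr₀ (heu j k)
      | z1 i =>
          have := hrow _ hr₀; rw [sum_z1, if_neg (hz2no i)] at this; exact this.symm
      | Cl j =>
          have := hrow _ hr₀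
          rw [sum_Cl, Finset.sum_eq_zero (fun k _ => if_neg (hvno j k))] at this
          exact this.symm
    have hano : ColV.a ∉ SC := by
      intro ha
      have := hrle (RowV.y ⟨0, hn⟩)
      rw [sum_y, if_pos ha, hα0] at this
      linarith
    obtain ⟨c₀, hc₀⟩ := hSC
    cases c₀ with
    | x i =>
        have := hcol _ hc₀; rw [sum_x, if_neg (hey i)] at this; linarith
    | xbar i =>
        have := hcol _ hc₀; rw [sum_xbar, if_neg (heyb i)] at this; linarith
    | z2 i => exact hz2no i hc₀
    | v j k => exact hvno j k hc₀
    | a => exact hano hc₀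
  -- β = N
  have hβN : β = (m + n : ℝ) := by
    obtain ⟨c₀, hc₀⟩ := hSC
    have hc0 := hcol c₀ hc₀
    cases c₀ with
    | x i =>
        rw [sum_x] at hc0
        by_cases h1 : RowV.y i ∈ SR
        · rw [if_pos h1] at hc0; exact hc0.symm
        · rw [if_neg h1] at hc0; linarith
    | xbar i =>
        rw [sum_xbar] at hc0
        by_cases h1 : RowV.ybar i ∈ SR
        · rw [if_pos h1] at hc0; exact hc0.symm
        · rw [if_neg h1] at hc0; linarith
    | v j k =>
        rw [sum_v] at hc0
        by_cases h1 : RowV.u j k ∈ SR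
        · rw [if_pos h1] at hc0; exact hc0.symm
        · rw [if_neg h1] at hc0; linarith
    | a =>
        rw [sum_a] at hc0
        have l1 : (∑ j : Fin m, if RowV.Cl j ∈ SR then (1:ℝ) else 0) ≤ (m:ℝ) := by
          simpa using ind_sum_le (fun j : Fin m => RowV.Cl j ∈ SR)
        have l2 : (∑ i : Fin n, if RowV.z1 i ∈ SR then (1:ℝ) else 0) ≤ (n:ℝ) := by
          simpa using ind_sum_le (fun i : Fin n => RowV.z1 i ∈ SR)
        linarith
    | z2 i =>
        rw [sum_z2] at hc0
        by_cases h1 : RowV.y i ∈ SR <;> by_cases h2 : RowV.ybar i ∈ SR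
        · rw [if_pos h1, if_pos h2] at hc0
          exfalso
          have hano : ColV.a ∉ SC := by
            intro ha
            have h' := hcol _ ha; rw [sum_a] at h'
            have l1 : (∑ j : Fin m, if RowV.Cl j ∈ SR then (1:ℝ) else 0) ≤ (m:ℝ) := by
              simpa using ind_sum_le (fun j : Fin m => RowV.Cl j ∈ SR)
            have l2 : (∑ i : Fin n, if RowV.z1 i ∈ SR then (1:ℝ) else 0) ≤ (n:ℝ) := by
              simpa using ind_sum_le (fun i : Fin n => RowV.z1 i ∈ SR)
            linarith
          have hα0 : α = 0 := by
            have h' := hrow _ h1; rw [sum_y, if_neg hano] at h'; exact h'.symm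
          have h' := hrle (RowV.z1 i)
          rw [sum_z1, if_pos hc₀, hα0] at h'
          linarith
        · rw [if_pos h1, if_neg h2] at hc0; linarith
        · rw [if_neg h1, if_pos h2] at hc0; linarith
        · rw [if_neg h1, if_neg h2] at hc0; linarith
  -- membership transfer facts
  have hx_mem : ∀ i, ColV.x i ∈ SC → RowV.y i ∈ SR := by
    intro i hi
    have h' := hcol _ hi; rw [sum_x, hβN] at h'
    by_contra hno; rw [if_neg hno] at h'; linarith
  have hxb_mem : ∀ i, ColV.xbar i ∈ SC → RowV.ybar i ∈ SR := by
    intro i hi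
    have h' := hcol _ hi; rw [sum_xbar, hβN] at h'
    by_contra hno; rw [if_neg hno] at h'; linarith
  have hv_mem : ∀ j k, ColV.v j k ∈ SC → RowV.u j k ∈ SR := by
    intro j k hi
    have h' := hcol _ hi; rw [sum_v, hβN] at h'
    by_contra hno; rw [if_neg hno] at h'; linarith
  have hz2_mem : ∀ i, ColV.z2 i ∈ SC → (RowV.y i ∈ SR ∨ RowV.ybar i ∈ SR) := by
    intro i hi
    by_contra hno; push_neg at hno
    have h' := hcol _ hi
    rw [sum_z2, if_neg hno.1, if_neg hno.2, hβN] at h'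
    linarith
  have hnotboth : ∀ i, ¬(RowV.y i ∈ SR ∧ RowV.ybar i ∈ SR) := by
    rintro i ⟨h1, h2⟩
    have h' := hcle (ColV.z2 i)
    rw [sum_z2, if_pos h1, if_pos h2, hβN] at h'
    linarith
  -- α is positive
  have hαnn : (0:ℝ) ≤ α := by
    obtain ⟨r₀, hr₀⟩ := hSR
    have := hrnn r₀; rwa [hrow r₀ hr₀] at this
  have hαpos : (0:ℝ) < α := by
    rcases lt_or_eq_of_le hαnn with h' | h'
    · exact h'
    · exfalso
      have hα0 : α = 0 := h'.symm
      have hz2no : ∀ i, ColV.z2 i ∉ SC := by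
        intro i hi
        have hh := hrle (RowV.z1 i); rw [sum_z1, if_pos hi, hα0] at hh; linarith
      have hvno : ∀ j k, ColV.v j k ∉ SC := by
        intro j k hv
        have hh := hrle (RowV.Cl j); rw [sum_Cl, hα0] at hh
        have hone : (1:ℝ) ≤ ∑ k' : Fin 3, if ColV.v j k' ∈ SC then (1:ℝ) else 0 := by
          simpa using ind_one_le_sum (fun k' : Fin 3 => ColV.v j k' ∈ SC) hv
        linarith
      have hano : ColV.a ∉ SC := by
        intro ha
        have hh := hrle (RowV.y ⟨0, hn⟩); rw [sum_y, if_pos ha, hα0] at hh; linarith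
      have hxno : ∀ i, ColV.x i ∉ SC := by
        intro i hx
        obtain ⟨j, k, hjk⟩ := hlit i true
        have hh := hrle (RowV.u j k); rw [sum_u, hα0] at hh
        have hl : lit cl j k = ColV.x i := by simp [lit, hjk]
        rw [hl, if_pos hx] at hh; linarith
      have hxbno : ∀ i, ColV.xbar i ∉ SC := by
        intro i hx
        obtain ⟨j, k, hjk⟩ := hlit i false
        have hh := hrle (RowV.u j k); rw [sum_u, hα0] at hh
        have hl : lit cl j k = ColV.xbar i := by simp [lit, hjk]
        rw [hl, if_pos hx] at hh; linarith
      obtain ⟨c₀, hc₀⟩ := hSC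
      cases c₀ with
      | x i => exact hxno i hc₀
      | xbar i => exact hxbno i hc₀
      | z2 i => exact hz2no i hc₀
      | v j k => exact hvno j k hc₀
      | a => exact hano hc₀
  -- a ∈ SC
  have ha : ColV.a ∈ SC := by
    have key : ∀ i, (RowV.y i ∈ SR ∨ RowV.ybar i ∈ SR) → ColV.a ∈ SC := by
      intro i hi
      by_contra hano
      rcases hi with hi | hi
      · have h' := hrow _ hi; rw [sum_y, if_neg hano] at h'; linarith
      · have h' := hrow _ hi; rw [sum_ybar, if_neg hano] at h'; linarith
    obtain ⟨c₀, hc₀⟩ := hSC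
    cases c₀ with
    | x i => exact key i (Or.inl (hx_mem i hc₀))
    | xbar i => exact key i (Or.inr (hxb_mem i hc₀))
    | z2 i => exact key i (hz2_mem i hc₀)
    | a => exact hc₀
    | v j k =>
        have hu := hv_mem j k hc₀
        have h' := hrow _ hu; rw [sum_u] at h'
        have hlitSC : lit cl j k ∈ SC := by
          by_contra hno; rw [if_neg hno] at h'; linarith
        unfold lit at hlitSC
        rcases hb : (cl j k).2 with _ | _
        · rw [hb] at hlitSC
          simp only [Bool.false_eq_true, if_false] at hlitSC
          exact key _ (Or.inr (hxb_mem _ hlitSC))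
        · rw [hb] at hlitSC
          simp only [if_true] at hlitSC
          exact key _ (Or.inl (hx_mem _ hlitSC))
  -- all clause and z1 vertices are in SR
  have haeq := hcol _ ha
  rw [sum_a, hβN] at haeq
  have l1 : (∑ j : Fin m, if RowV.Cl j ∈ SR then (1:ℝ) else 0) ≤ (m:ℝ) := by
    simpa using ind_sum_le (fun j : Fin m => RowV.Cl j ∈ SR)
  have l2 : (∑ i : Fin n, if RowV.z1 i ∈ SR then (1:ℝ) else 0) ≤ (n:ℝ) := by
    simpa using ind_sum_le (fun i : Fin n => RowV.z1 i ∈ SR)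
  have hCl : ∀ j, RowV.Cl j ∈ SR := by
    apply ind_sum_all (fun j : Fin m => RowV.Cl j ∈ SR)
    simp only [Fintype.card_fin]
    linarith
  have hz1 : ∀ i, RowV.z1 i ∈ SR := by
    apply ind_sum_all (fun i : Fin n => RowV.z1 i ∈ SR)
    simp only [Fintype.card_fin]
    linarith
  have hz2SC : ∀ i, ColV.z2 i ∈ SC := by
    intro i
    have h' := hrow _ (hz1 i); rw [sum_z1] at h'
    by_contra hno; rw [if_neg hno] at h'; linarith
  have hα1 : α = 1 := by
    have h' := hrow _ (hz1 ⟨0, hn⟩)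
    rw [sum_z1, if_pos (hz2SC _)] at h'
    exact h'.symm
  -- the satisfying assignment
  refine ⟨fun i => decide (RowV.y i ∈ SR), fun j => ?_⟩
  have hclj := hrow _ (hCl j)
  rw [sum_Cl, hα1] at hclj
  have hex : ∃ k, ColV.v j k ∈ SC := by
    by_contra hno; push_neg at hno
    rw [Finset.sum_eq_zero (fun k _ => if_neg (hno k))] at hclj
    norm_num at hclj
  obtain ⟨k, hk⟩ := hex
  refine ⟨k, ?_⟩
  have hu := hv_mem j k hk
  have h' := hrow _ hu
  rw [sum_u, hα1] at h'
  have hlitSC : lit cl j k ∈ SC := by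
    by_contra hno; rw [if_neg hno] at h'; norm_num at h'
  unfold lit at hlitSC
  rcases hb : (cl j k).2 with _ | _
  · rw [hb] at hlitSC
    simp only [Bool.false_eq_true, if_false] at hlitSC
    have hyb := hxb_mem _ hlitSC
    have hyno : RowV.y (cl j k).1 ∉ SR := fun hy => hnotboth _ ⟨hy, hyb⟩
    simp [hyno]
  · rw [hb] at hlitSC
    simp only [if_true] at hlitSC
    have hy := hx_mem _ hlitSC
    simp [hy]

end Bwd
/-- A 3-CNF formula `φ` (each clause with exactly three
literals, each literal occurring in at least one clause) is satisfiable iff the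
digraph `G_φ` from the reduction has an undominated out-regular induced
subgraph. -/
theorem satisfiable_iff_undominated_out_regular
    {n m : ℕ} (cl : Fin m → Fin 3 → Fin n × Bool)
    (hm : 1 ≤ m) (hn : 1 ≤ n)
    (hlit : ∀ (i : Fin n) (b : Bool), ∃ (j : Fin m) (k : Fin 3), cl j k = (i, b)) :
    (∃ ξ : Fin n → Bool, Satisfies cl ξ) ↔
    (∃ (α β : ℝ) (SR : Finset (RowV n m)) (SC : Finset (ColV n m)),
        SR.Nonempty ∧ SC.Nonempty ∧
        (∀ r ∈ SR, ∑ c ∈ SC, wR cl r c = α) ∧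
        (∀ c ∈ SC, ∑ r ∈ SR, wC c r = β) ∧
        (∀ r ∉ SR, ∑ c ∈ SC, wR cl r c ≤ α) ∧
        (∀ c ∉ SC, ∑ r ∈ SR, wC c r ≤ β)) := by
  exact ⟨fwd cl hm hn, bwd cl hm hn hlit⟩
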